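/- Let n ≥ 2. Suppose given real numbers a_{p,q} for 1 ≤ q ≤ n and n+1−q ≤ p ≤ n, all nonzero. Let u = Π_{q=1}^{n} ( y_{n+1−q}(a_{n+1−q,q}) · y_{n+2−q}(a_{n+2−q,q}) ⋯ y_n(a_{n,q}) ), factors multiplied left to right in the order written, and let u₀ be the product obtained from u by deleting every y_n-factor, i.e., u₀ = Π_{q=2}^{n} ( y_{n+1−q}(a_{n+1−q,q}) ⋯ y_{n−1}(a_{n−1,q}) ). Then u has n×n block form [[A, 0],[C, (Aᵀ)⁻¹]], the upper-left n×n block of u₀ equals A, and C_{p,q} = 0 for all p,q with p + q < n + 1 (1-based indexing). -/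

import Mathlib

open Matrix

/-- The negative simple root group element `y_i(a)` (1-based index `i`), a `2n×2n` matrix:
`y_i(a) = I + a(E_{i+1,i} − E_{n+i,n+i+1})` for `1 ≤ i ≤ n-1`, and
`y_n(a) = I + a E_{2n,n}`. -/
def yMat (n : ℕ) (i : ℕ) (a : ℝ) : Matrix (Fin (n + n)) (Fin (n + n)) ℝ :=
  if h : 1 ≤ i ∧ i < n then
    1 + a • (Matrix.single (Fin.castAdd n ⟨i, h.2⟩) (Fin.castAdd n ⟨i - 1, by omega⟩) 1
      - Matrix.single (Fin.natAdd n ⟨i - 1, by omega⟩) (Fin.natAdd n ⟨i, h.2⟩) 1)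
  else if h2 : i = n ∧ 1 ≤ n then
    1 + a • Matrix.single (Fin.natAdd n ⟨n - 1, by omega⟩) (Fin.castAdd n ⟨n - 1, by omega⟩) 1
  else 1

/-- The product `u = Π_{q=1}^{n} ( y_{n+1−q}(a_{n+1−q,q}) ⋯ y_n(a_{n,q}) )`,
factors multiplied left to right (the `q = 1` group leftmost). -/
def uProd (n : ℕ) (a : ℕ → ℕ → ℝ) : Matrix (Fin (n + n)) (Fin (n + n)) ℝ :=
  ((List.range n).map (fun m =>
    ((List.range (m + 1)).map (fun j =>
      yMat n (n - m + j) (a (n - m + j) (m + 1)))).prod)).prod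

/-- The product `u₀` obtained from `u` by deleting every `y_n`-factor. -/
def u0Prod (n : ℕ) (a : ℕ → ℕ → ℝ) : Matrix (Fin (n + n)) (Fin (n + n)) ℝ :=
  ((List.range n).map (fun m =>
    ((List.range m).map (fun j =>
      yMat n (n - m + j) (a (n - m + j) (m + 1)))).prod)).prod

/-- Upper-left `n×n` block. -/
def blk11 (n : ℕ) (u : Matrix (Fin (n + n)) (Fin (n + n)) ℝ) : Matrix (Fin n) (Fin n) ℝ :=
  Matrix.of fun i j => u (Fin.castAdd n i) (Fin.castAdd n j)

/-- Upper-right `n×n` block. -/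
def blk12 (n : ℕ) (u : Matrix (Fin (n + n)) (Fin (n + n)) ℝ) : Matrix (Fin n) (Fin n) ℝ :=
  Matrix.of fun i j => u (Fin.castAdd n i) (Fin.natAdd n j)

/-- Lower-left `n×n` block. -/
def blk21 (n : ℕ) (u : Matrix (Fin (n + n)) (Fin (n + n)) ℝ) : Matrix (Fin n) (Fin n) ℝ :=
  Matrix.of fun i j => u (Fin.natAdd n i) (Fin.castAdd n j)

/-- Lower-right `n×n` block. -/
def blk22 (n : ℕ) (u : Matrix (Fin (n + n)) (Fin (n + n)) ℝ) : Matrix (Fin n) (Fin n) ℝ :=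
  Matrix.of fun i j => u (Fin.natAdd n i) (Fin.natAdd n j)

lemma yMat_lt_apply {n i : ℕ} (h1 : 1 ≤ i) (h2 : i < n) (a : ℝ) (p q : Fin (n+n)) :
    yMat n i a p q = (if (p:ℕ) = q then 1 else 0)
      + (if (p:ℕ) = i ∧ (q:ℕ) + 1 = i then a else 0)
      - (if (p:ℕ) + 1 = n + i ∧ (q:ℕ) = n + i then a else 0) := by
  rw [yMat, dif_pos (⟨h1, h2⟩ : 1 ≤ i ∧ i < n)]
  simp only [Matrix.add_apply, Matrix.smul_apply, Matrix.sub_apply, Matrix.one_apply,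
    Matrix.single, Matrix.of_apply, smul_eq_mul, Fin.ext_iff, Fin.coe_castAdd,
    Fin.coe_natAdd]
  split_ifs <;> first | (exfalso; omega) | ring1

lemma yMat_n_apply {n : ℕ} (hn : 1 ≤ n) (a : ℝ) (p q : Fin (n+n)) :
    yMat n n a p q = (if (p:ℕ) = q then 1 else 0)
      + (if (p:ℕ) + 1 = n + n ∧ (q:ℕ) + 1 = n then a else 0) := by
  rw [yMat, dif_neg (by omega), dif_pos (⟨rfl, hn⟩ : n = n ∧ 1 ≤ n)]
  simp only [Matrix.add_apply, Matrix.smul_apply, Matrix.one_apply,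
    Matrix.single, Matrix.of_apply, smul_eq_mul, Fin.ext_iff, Fin.coe_castAdd,
    Fin.coe_natAdd]
  split_ifs <;> first | (exfalso; omega) | ring1

section Preds
variable {n : ℕ}

/-- upper-right block vanishes -/
def Z12 (n : ℕ) (u : Matrix (Fin (n+n)) (Fin (n+n)) ℝ) : Prop :=
  ∀ p q : Fin (n+n), (p:ℕ) < n → n ≤ (q:ℕ) → u p q = 0

/-- lower-left block vanishes -/
def Z21 (n : ℕ) (u : Matrix (Fin (n+n)) (Fin (n+n)) ℝ) : Prop :=
  ∀ p q : Fin (n+n), n ≤ (p:ℕ) → (q:ℕ) < n → u p q = 0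

/-- lower-right block is upper triangular with off-diagonal entries only in rows ≥ b -/
def DInv (n b : ℕ) (u : Matrix (Fin (n+n)) (Fin (n+n)) ℝ) : Prop :=
  ∀ p q : Fin (n+n), n ≤ (p:ℕ) → n ≤ (q:ℕ) → u p q ≠ 0 →
    (p:ℕ) = q ∨ ((p:ℕ) < q ∧ b ≤ (p:ℕ))

/-- upper-left block: off-diagonal entries only strictly subdiagonal with row in [b,c] -/
def ALow (n b c : ℕ) (u : Matrix (Fin (n+n)) (Fin (n+n)) ℝ) : Prop :=
  ∀ p q : Fin (n+n), (p:ℕ) < n → (q:ℕ) < n → u p q ≠ 0 →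
    (p:ℕ) = q ∨ ((p:ℕ) = (q:ℕ) + 1 ∧ b ≤ (p:ℕ) ∧ (p:ℕ) ≤ c)

/-- lower-left block of the prefix: support bound -/
def CPref (n c : ℕ) (u : Matrix (Fin (n+n)) (Fin (n+n)) ℝ) : Prop :=
  ∀ p q : Fin (n+n), n ≤ (p:ℕ) → (q:ℕ) < n → u p q ≠ 0 → c ≤ (p:ℕ) + q

/-- lower-left block of a group: last column only, rows ≥ b -/
def CGrp (n b : ℕ) (u : Matrix (Fin (n+n)) (Fin (n+n)) ℝ) : Prop :=
  ∀ p q : Fin (n+n), n ≤ (p:ℕ) → (q:ℕ) < n → u p q ≠ 0 → (q:ℕ) + 1 = n ∧ b ≤ (p:ℕ)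

lemma mul_entry_zero {P Q : Matrix (Fin (n+n)) (Fin (n+n)) ℝ} {p q : Fin (n+n)}
    (h : ∀ k : Fin (n+n), P p k = 0 ∨ Q k q = 0) : (P * Q) p q = 0 := by
  rw [Matrix.mul_apply]
  apply Finset.sum_eq_zero
  intro k _
  rcases h k with h | h <;> simp [h]

lemma Z12_one : Z12 n 1 := by
  intro p q hp hq
  apply Matrix.one_apply_ne
  intro h; subst h; omega

lemma Z12_mul {P Q} (hP : Z12 n P) (hQ : Z12 n Q) : Z12 n (P * Q) := by
  intro p q hp hq
  apply mul_entry_zero; intro k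
  by_cases hk : (k:ℕ) < n
  · exact Or.inr (hQ k q hk hq)
  · exact Or.inl (hP p k hp (by omega))

lemma Z21_one : Z21 n 1 := by
  intro p q hp hq
  apply Matrix.one_apply_ne
  intro h; subst h; omega

lemma Z21_mul {P Q} (hP12 : Z12 n P) (hP : Z21 n P) (hQ : Z21 n Q) : Z21 n (P * Q) := by
  intro p q hp hq
  apply mul_entry_zero; intro k
  by_cases hk : (k:ℕ) < n
  · exact Or.inl (hP p k hp hk)
  · exact Or.inr (hQ k q (by omega) hq)

lemma DInv_one {b : ℕ} : DInv n b 1 := by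
  intro p q _ _ hne
  left
  by_contra h
  exact hne (Matrix.one_apply_ne (by simp [Fin.ext_iff]; omega))

lemma DInv_mul {b P Q} (hQ12 : Z12 n Q) (hP : DInv n b P) (hQ : DInv n b Q) :
    DInv n b (P * Q) := by
  intro p q hp hq hne
  by_contra hcon
  apply hne
  apply mul_entry_zero; intro k
  rcases eq_or_ne (P p k) 0 with h | h
  · exact Or.inl h
  rcases eq_or_ne (Q k q) 0 with h' | h'
  · exact Or.inr h'
  exfalso
  by_cases hk : (k:ℕ) < n
  · exact h' (hQ12 k q hk hq)
  · have f1 := hP p k hp (by omega) h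
    have f2 := hQ k q (by omega) hq h'
    omega

lemma DInv_mono {b b' : ℕ} {P} (h : b' ≤ b) (hP : DInv n b P) : DInv n b' P := by
  intro p q hp hq hne
  rcases hP p q hp hq hne with h1 | h1
  · exact Or.inl h1
  · exact Or.inr ⟨h1.1, by omega⟩

end Preds

section YFacts
variable {n i : ℕ} {a : ℝ}

lemma yMat_lt_supp (h1 : 1 ≤ i) (h2 : i < n) {a : ℝ} {p q : Fin (n+n)}
    (hne : yMat n i a p q ≠ 0) :
    (p:ℕ) = q ∨ ((p:ℕ) = i ∧ (q:ℕ) + 1 = i) ∨ ((p:ℕ) + 1 = n + i ∧ (q:ℕ) = n + i) := by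
  by_contra hc
  apply hne
  rw [yMat_lt_apply h1 h2]
  rw [if_neg (by omega), if_neg (by omega), if_neg (by omega)]
  ring

lemma yMat_n_supp (hn : 1 ≤ n) {a : ℝ} {p q : Fin (n+n)}
    (hne : yMat n n a p q ≠ 0) :
    (p:ℕ) = q ∨ ((p:ℕ) + 1 = n + n ∧ (q:ℕ) + 1 = n) := by
  by_contra hc
  apply hne
  rw [yMat_n_apply hn]
  rw [if_neg (by omega), if_neg (by omega)]
  ring

lemma yMat_lt_Z12 (h1 : 1 ≤ i) (h2 : i < n) : Z12 n (yMat n i a) := by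
  intro p q hp hq
  by_contra hne
  rcases yMat_lt_supp h1 h2 hne with h | h | h <;> omega

lemma yMat_lt_Z21 (h1 : 1 ≤ i) (h2 : i < n) : Z21 n (yMat n i a) := by
  intro p q hp hq
  by_contra hne
  rcases yMat_lt_supp h1 h2 hne with h | h | h <;> omega

lemma yMat_lt_DInv (h1 : 1 ≤ i) (h2 : i < n) {b : ℕ} (hb : b + 1 ≤ n + i) :
    DInv n b (yMat n i a) := by
  intro p q hp hq hne
  rcases yMat_lt_supp h1 h2 hne with h | h | h <;> omega

lemma yMat_n_Z12 (hn : 1 ≤ n) : Z12 n (yMat n n a) := by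
  intro p q hp hq
  by_contra hne
  rcases yMat_n_supp hn hne with h | h <;> omega

lemma yMat_n_DInv (hn : 1 ≤ n) {b : ℕ} : DInv n b (yMat n n a) := by
  intro p q hp hq hne
  rcases yMat_n_supp hn hne with h | h <;> omega

end YFacts

section Group
variable {n : ℕ}

lemma ALow_one {b c : ℕ} : ALow n b c (1 : Matrix (Fin (n+n)) (Fin (n+n)) ℝ) := by
  intro p q hp hq hne
  left
  by_contra h
  exact hne (Matrix.one_apply_ne (by simp [Fin.ext_iff]; omega))

lemma ALow_step {b t i : ℕ} {H Y : Matrix (Fin (n+n)) (Fin (n+n)) ℝ}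
    (hH : ALow n b t H) (hY21 : Z21 n Y)
    (hYA : ∀ p q : Fin (n+n), (p:ℕ) < n → (q:ℕ) < n → Y p q ≠ 0 →
      (p:ℕ) = q ∨ ((p:ℕ) = i ∧ (q:ℕ) + 1 = i))
    (hbi : b ≤ i) (hti : t + 1 = i) :
    ALow n b i (H * Y) := by
  intro p q hp hq hne
  by_contra hcon
  apply hne
  apply mul_entry_zero; intro k
  rcases eq_or_ne (H p k) 0 with h | h
  · exact Or.inl h
  rcases eq_or_ne (Y k q) 0 with h' | h'
  · exact Or.inr h'
  exfalso
  by_cases hk : (k:ℕ) < n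
  · have f1 := hH p k hp hk h
    have f2 := hYA k q hk hq h'
    omega
  · exact h' (hY21 k q (by omega) hq)

/-- the partial products of a group (without the final `y_n` factor) -/
lemma Hpart_inv (m : ℕ) (hm : m < n) (g : ℕ → ℝ) (t : ℕ) (ht : t ≤ m) :
    Z12 n (((List.range t).map (fun j => yMat n (n - m + j) (g j))).prod) ∧
    Z21 n (((List.range t).map (fun j => yMat n (n - m + j) (g j))).prod) ∧
    ALow n (n - m) (n - m + t - 1) (((List.range t).map (fun j => yMat n (n - m + j) (g j))).prod) ∧
    DInv n (n + n - m - 1) (((List.range t).map (fun j => yMat n (n - m + j) (g j))).prod) := by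
  induction t with
  | zero =>
    simp only [List.range_zero, List.map_nil, List.prod_nil]
    refine ⟨Z12_one, Z21_one, ?_, DInv_one⟩
    exact ALow_one
  | succ t ih =>
    obtain ⟨ih1, ih2, ih3, ih4⟩ := ih (by omega)
    rw [List.range_succ, List.map_append, List.prod_append, List.map_cons, List.map_nil,
      List.prod_cons, List.prod_nil, mul_one]
    have hi1 : 1 ≤ n - m + t := by omega
    have hi2 : n - m + t < n := by omega
    refine ⟨Z12_mul ih1 (yMat_lt_Z12 hi1 hi2), Z21_mul ih1 ih2 (yMat_lt_Z21 hi1 hi2), ?_, ?_⟩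
    · have := ALow_step (i := n - m + t) (Y := yMat n (n - m + t) (g t)) ih3 (yMat_lt_Z21 hi1 hi2)
        (fun p q hp hq hne => by
          rcases yMat_lt_supp hi1 hi2 hne with h | h | h
          · exact Or.inl h
          · exact Or.inr h
          · omega)
        (by omega) (by omega)
      have he : n - m + (t+1) - 1 = n - m + t := by omega
      rw [he]
      exact this
    · exact DInv_mul (yMat_lt_Z12 hi1 hi2) ih4 (yMat_lt_DInv hi1 hi2 (by omega))

/-- the full group satisfies the group invariants -/
lemma Grp_inv (m : ℕ) (hm : m < n) (g : ℕ → ℝ) :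
    Z12 n (((List.range (m+1)).map (fun j => yMat n (n - m + j) (g j))).prod) ∧
    DInv n (n + n - m - 1) (((List.range (m+1)).map (fun j => yMat n (n - m + j) (g j))).prod) ∧
    (∀ p q : Fin (n+n), (p:ℕ) < n → (q:ℕ) < n →
      (((List.range (m+1)).map (fun j => yMat n (n - m + j) (g j))).prod) p q ≠ 0 →
      (q:ℕ) ≤ p ∧ (p:ℕ) ≤ (q:ℕ) + 1) ∧
    CGrp n (n + n - m - 1) (((List.range (m+1)).map (fun j => yMat n (n - m + j) (g j))).prod) := by
  obtain ⟨h1, h2, h3, h4⟩ := Hpart_inv m hm g m le_rfl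
  have hn1 : 1 ≤ n := by omega
  have hnm : n - m + m = n := by omega
  rw [List.range_succ, List.map_append, List.prod_append, List.map_cons, List.map_nil,
    List.prod_cons, List.prod_nil, mul_one, hnm]
  set H := ((List.range m).map (fun j => yMat n (n - m + j) (g j))).prod with hH
  refine ⟨Z12_mul h1 (yMat_n_Z12 hn1), DInv_mul (yMat_n_Z12 hn1) h4 (yMat_n_DInv hn1), ?_, ?_⟩
  · intro p q hp hq hne
    by_contra hcon
    apply hne
    apply mul_entry_zero; intro k
    rcases eq_or_ne (H p k) 0 with h | h
    · exact Or.inl h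
    rcases eq_or_ne (yMat n n (g m) k q) 0 with h' | h'
    · exact Or.inr h'
    exfalso
    by_cases hk : (k:ℕ) < n
    · have f1 := h3 p k hp hk h
      rcases yMat_n_supp hn1 h' with f2 | f2 <;> omega
    · exact h (h1 p k hp (by omega))
  · intro p q hp hq hne
    by_contra hcon
    apply hne
    apply mul_entry_zero; intro k
    rcases eq_or_ne (H p k) 0 with h | h
    · exact Or.inl h
    rcases eq_or_ne (yMat n n (g m) k q) 0 with h' | h'
    · exact Or.inr h'
    exfalso
    by_cases hk : (k:ℕ) < n
    · exact h (h2 p k hp hk)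
    · rcases yMat_n_supp hn1 h' with f2 | f2
      · omega
      · have f1 := h4 p k hp (by omega) h
        omega

end Group

section Prefix
variable {n : ℕ}

lemma CPref_one {c : ℕ} : CPref n c (1 : Matrix (Fin (n+n)) (Fin (n+n)) ℝ) := by
  intro p q hp hq hne
  exfalso
  exact hne (Matrix.one_apply_ne (by simp [Fin.ext_iff]; omega))

lemma CPref_step {m : ℕ} {P G : Matrix (Fin (n+n)) (Fin (n+n)) ℝ}
    (hPC : CPref n (n + n + n - 1 - m) P) (hPD : DInv n (n + n - m) P)
    (hGA : ∀ p q : Fin (n+n), (p:ℕ) < n → (q:ℕ) < n → G p q ≠ 0 →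
      (q:ℕ) ≤ p ∧ (p:ℕ) ≤ (q:ℕ) + 1)
    (hGC : CGrp n (n + n - m - 1) G) (hm : m < n) :
    CPref n (n + n + n - 1 - (m + 1)) (P * G) := by
  intro p q hp hq hne
  by_contra hcon
  apply hne
  apply mul_entry_zero; intro k
  rcases eq_or_ne (P p k) 0 with h | h
  · exact Or.inl h
  rcases eq_or_ne (G k q) 0 with h' | h'
  · exact Or.inr h'
  exfalso
  by_cases hk : (k:ℕ) < n
  · have f1 := hPC p k hp hk h
    have f2 := hGA k q hk hq h'
    omega
  · have f1 := hPD p k hp (by omega) h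
    have f2 := hGC k q (by omega) hq h'
    omega

/-- outer induction: prefix invariants -/
lemma Pref_inv (a : ℕ → ℕ → ℝ) (m : ℕ) (hm : m ≤ n) :
    Z12 n (((List.range m).map (fun m' =>
      ((List.range (m' + 1)).map (fun j =>
        yMat n (n - m' + j) (a (n - m' + j) (m' + 1)))).prod)).prod) ∧
    DInv n (n + n - m) (((List.range m).map (fun m' =>
      ((List.range (m' + 1)).map (fun j =>
        yMat n (n - m' + j) (a (n - m' + j) (m' + 1)))).prod)).prod) ∧
    CPref n (n + n + n - 1 - m) (((List.range m).map (fun m' =>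
      ((List.range (m' + 1)).map (fun j =>
        yMat n (n - m' + j) (a (n - m' + j) (m' + 1)))).prod)).prod) := by
  induction m with
  | zero =>
    simp only [List.range_zero, List.map_nil, List.prod_nil]
    exact ⟨Z12_one, DInv_one, CPref_one⟩
  | succ m ih =>
    obtain ⟨ih1, ih2, ih3⟩ := ih (by omega)
    have hm : m < n := by omega
    obtain ⟨g1, g2, g3, g4⟩ := Grp_inv (n := n) m hm (fun j => a (n - m + j) (m + 1))
    rw [List.range_succ, List.map_append, List.prod_append, List.map_cons, List.map_nil,
      List.prod_cons, List.prod_nil, mul_one]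
    refine ⟨Z12_mul ih1 g1, ?_, ?_⟩
    · exact DInv_mul g1 (DInv_mono (by omega) ih2) (DInv_mono (by omega) g2)
    · exact CPref_step ih3 ih2 g3 g4 hm

end Prefix

section Blk
variable {n : ℕ}

lemma blk11_mul {P Q : Matrix (Fin (n+n)) (Fin (n+n)) ℝ} (hP : Z12 n P) :
    blk11 n (P * Q) = blk11 n P * blk11 n Q := by
  ext p q
  show (P * Q) (Fin.castAdd n p) (Fin.castAdd n q) = _
  rw [Matrix.mul_apply, Matrix.mul_apply, Fin.sum_univ_add]
  have h0 : ∀ k : Fin n, P (Fin.castAdd n p) (Fin.natAdd n k) * Q (Fin.natAdd n k) (Fin.castAdd n q) = 0 := by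
    intro k
    rw [hP _ _ (by simp) (by simp), zero_mul]
  rw [Finset.sum_congr rfl (fun k _ => h0 k), Finset.sum_const_zero, add_zero]
  rfl

lemma blk22_mul {P Q : Matrix (Fin (n+n)) (Fin (n+n)) ℝ} (hQ : Z12 n Q) :
    blk22 n (P * Q) = blk22 n P * blk22 n Q := by
  ext p q
  show (P * Q) (Fin.natAdd n p) (Fin.natAdd n q) = _
  rw [Matrix.mul_apply, Matrix.mul_apply, Fin.sum_univ_add]
  have h0 : ∀ k : Fin n, P (Fin.natAdd n p) (Fin.castAdd n k) * Q (Fin.castAdd n k) (Fin.natAdd n q) = 0 := by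
    intro k
    rw [hQ _ _ (by simp) (by simp), mul_zero]
  rw [Finset.sum_congr rfl (fun k _ => h0 k), Finset.sum_const_zero, zero_add]
  rfl

lemma blk11_one : blk11 n (1 : Matrix (Fin (n+n)) (Fin (n+n)) ℝ) = 1 := by
  ext p q
  show (1 : Matrix (Fin (n+n)) (Fin (n+n)) ℝ) _ _ = _
  simp [Matrix.one_apply, Fin.ext_iff]

lemma blk22_one : blk22 n (1 : Matrix (Fin (n+n)) (Fin (n+n)) ℝ) = 1 := by
  ext p q
  show (1 : Matrix (Fin (n+n)) (Fin (n+n)) ℝ) _ _ = _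
  simp [Matrix.one_apply, Fin.ext_iff]

lemma my_std_transpose {N : Type*} [DecidableEq N] (i j : N) (c : ℝ) :
    (Matrix.single i j c)ᵀ = Matrix.single j i c := by
  ext a b
  simp [Matrix.single, Matrix.transpose_apply, and_comm]

def GoodT (n : ℕ) (u : Matrix (Fin (n+n)) (Fin (n+n)) ℝ) : Prop :=
  (blk11 n u)ᵀ * blk22 n u = 1

lemma GoodT_one : GoodT n 1 := by
  unfold GoodT
  rw [blk11_one, blk22_one, Matrix.transpose_one, Matrix.one_mul]

lemma GoodT_mul {P Q} (hPz : Z12 n P) (hQz : Z12 n Q) (hP : GoodT n P) (hQ : GoodT n Q) :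
    GoodT n (P * Q) := by
  unfold GoodT at *
  rw [blk11_mul hPz, blk22_mul hQz, Matrix.transpose_mul, Matrix.mul_assoc,
    ← Matrix.mul_assoc (blk11 n P)ᵀ, hP, Matrix.one_mul, hQ]

lemma blk11_yMat_lt {i : ℕ} (h1 : 1 ≤ i) (h2 : i < n) (a : ℝ) :
    blk11 n (yMat n i a) =
      1 + a • Matrix.single (⟨i, h2⟩ : Fin n) (⟨i - 1, by omega⟩ : Fin n) (1:ℝ) := by
  ext p q
  show yMat n i a (Fin.castAdd n p) (Fin.castAdd n q) = _
  rw [yMat_lt_apply h1 h2]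
  have hp := p.isLt; have hq := q.isLt
  simp only [Matrix.add_apply, Matrix.smul_apply, Matrix.one_apply, Matrix.single,
    Matrix.of_apply, smul_eq_mul, Fin.ext_iff, Fin.coe_castAdd]
  split_ifs <;> first | (exfalso; omega) | ring1

lemma blk22_yMat_lt {i : ℕ} (h1 : 1 ≤ i) (h2 : i < n) (a : ℝ) :
    blk22 n (yMat n i a) =
      1 - a • Matrix.single (⟨i - 1, by omega⟩ : Fin n) (⟨i, h2⟩ : Fin n) (1:ℝ) := by
  ext p q
  show yMat n i a (Fin.natAdd n p) (Fin.natAdd n q) = _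
  rw [yMat_lt_apply h1 h2]
  have hp := p.isLt; have hq := q.isLt
  simp only [Matrix.sub_apply, Matrix.smul_apply, Matrix.one_apply, Matrix.single,
    Matrix.of_apply, smul_eq_mul, Fin.ext_iff, Fin.coe_natAdd]
  split_ifs <;> first | (exfalso; omega) | ring1

lemma blk11_yMat_n (hn : 1 ≤ n) (a : ℝ) : blk11 n (yMat n n a) = 1 := by
  ext p q
  show yMat n n a (Fin.castAdd n p) (Fin.castAdd n q) = _
  rw [yMat_n_apply hn]
  have hp := p.isLt; have hq := q.isLt
  simp only [Matrix.one_apply, Fin.ext_iff, Fin.coe_castAdd]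
  split_ifs <;> first | (exfalso; omega) | ring1

lemma blk22_yMat_n (hn : 1 ≤ n) (a : ℝ) : blk22 n (yMat n n a) = 1 := by
  ext p q
  show yMat n n a (Fin.natAdd n p) (Fin.natAdd n q) = _
  rw [yMat_n_apply hn]
  have hp := p.isLt; have hq := q.isLt
  simp only [Matrix.one_apply, Fin.ext_iff, Fin.coe_natAdd]
  split_ifs <;> first | (exfalso; omega) | ring1

lemma GoodT_yMat_lt {i : ℕ} (h1 : 1 ≤ i) (h2 : i < n) (a : ℝ) : GoodT n (yMat n i a) := by
  have hi1 : i - 1 < n := by omega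
  unfold GoodT
  rw [blk11_yMat_lt h1 h2, blk22_yMat_lt h1 h2]
  have hT : (1 + a • Matrix.single (⟨i, h2⟩ : Fin n) (⟨i - 1, hi1⟩ : Fin n) (1:ℝ))ᵀ
      = 1 + a • Matrix.single (⟨i - 1, hi1⟩ : Fin n) (⟨i, h2⟩ : Fin n) (1:ℝ) := by
    rw [Matrix.transpose_add, Matrix.transpose_one, Matrix.transpose_smul, my_std_transpose]
  rw [hT]
  have hEE : (Matrix.single (⟨i - 1, hi1⟩ : Fin n) (⟨i, h2⟩ : Fin n) (1:ℝ))
      * (Matrix.single (⟨i - 1, hi1⟩ : Fin n) (⟨i, h2⟩ : Fin n) (1:ℝ)) = 0 := by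
    have hne2 : (⟨i, h2⟩ : Fin n) ≠ (⟨i - 1, hi1⟩ : Fin n) := Fin.ne_of_val_ne (by simp; omega)
    exact Matrix.single_mul_single_of_ne (c := (1:ℝ)) (⟨i - 1, hi1⟩ : Fin n) (⟨i, h2⟩ : Fin n) (⟨i - 1, hi1⟩ : Fin n) hne2 1
  rw [Matrix.mul_sub, Matrix.mul_one, Matrix.add_mul, Matrix.one_mul, Matrix.smul_mul,
    Matrix.mul_smul, hEE, smul_zero, smul_zero]
  abel

lemma GoodT_yMat_n (hn : 1 ≤ n) (a : ℝ) : GoodT n (yMat n n a) := by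
  unfold GoodT
  rw [blk11_yMat_n hn, blk22_yMat_n hn, Matrix.transpose_one, Matrix.one_mul]

end Blk

section Assemble
variable {n : ℕ}

lemma prod_Z12_GoodT (l : List (Matrix (Fin (n+n)) (Fin (n+n)) ℝ))
    (h : ∀ x ∈ l, Z12 n x ∧ GoodT n x) : Z12 n l.prod ∧ GoodT n l.prod := by
  induction l with
  | nil => exact ⟨by rw [List.prod_nil]; exact Z12_one, by rw [List.prod_nil]; exact GoodT_one⟩
  | cons x xs ih =>
    rw [List.prod_cons]
    have hx := h x (by simp)
    have hxs := ih (fun y hy => h y (by simp [hy]))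
    exact ⟨Z12_mul hx.1 hxs.1, GoodT_mul hx.1 hxs.1 hx.2 hxs.2⟩

lemma uProd_Z12_GoodT (hn : 1 ≤ n) (a : ℕ → ℕ → ℝ) :
    Z12 n (uProd n a) ∧ GoodT n (uProd n a) := by
  apply prod_Z12_GoodT
  intro x hx
  rw [List.mem_map] at hx
  obtain ⟨m, hm, rfl⟩ := hx
  rw [List.mem_range] at hm
  apply prod_Z12_GoodT
  intro y hy
  rw [List.mem_map] at hy
  obtain ⟨j, hj, rfl⟩ := hy
  rw [List.mem_range] at hj
  by_cases hjm : j = m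
  · subst hjm
    have he : n - j + j = n := by omega
    rw [he]
    exact ⟨yMat_n_Z12 hn, GoodT_yMat_n hn _⟩
  · have h1 : 1 ≤ n - m + j := by omega
    have h2 : n - m + j < n := by omega
    exact ⟨yMat_lt_Z12 h1 h2, GoodT_yMat_lt h1 h2 _⟩

lemma blk11_pref_eq (a : ℕ → ℕ → ℝ) (m : ℕ) (hm : m ≤ n) :
    Z12 n (((List.range m).map (fun m' =>
      ((List.range m').map (fun j =>
        yMat n (n - m' + j) (a (n - m' + j) (m' + 1)))).prod)).prod) ∧
    blk11 n (((List.range m).map (fun m' =>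
      ((List.range m').map (fun j =>
        yMat n (n - m' + j) (a (n - m' + j) (m' + 1)))).prod)).prod) =
    blk11 n (((List.range m).map (fun m' =>
      ((List.range (m' + 1)).map (fun j =>
        yMat n (n - m' + j) (a (n - m' + j) (m' + 1)))).prod)).prod) := by
  induction m with
  | zero =>
    rw [List.range_zero, List.map_nil, List.prod_nil]
    exact ⟨Z12_one, rfl⟩
  | succ m ih =>
    obtain ⟨ih1, ih2⟩ := ih (by omega)
    have hm' : m < n := by omega
    have hn1 : 1 ≤ n := by omega
    obtain ⟨hz0, _, _, _⟩ := Hpart_inv (n := n) m hm' (fun j => a (n - m + j) (m + 1)) m le_rfl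
    obtain ⟨pz, _, _⟩ := Pref_inv (n := n) a m (by omega)
    rw [List.prod_range_succ, List.prod_range_succ]
    constructor
    · exact Z12_mul ih1 hz0
    · rw [blk11_mul ih1, blk11_mul pz, ih2]
      congr 1
      show blk11 n (((List.range m).map (fun j =>
          yMat n (n - m + j) (a (n - m + j) (m + 1)))).prod) =
        blk11 n (((List.range (m + 1)).map (fun j =>
          yMat n (n - m + j) (a (n - m + j) (m + 1)))).prod)
      rw [List.prod_range_succ]
      have he : n - m + m = n := by omega
      rw [he, blk11_mul hz0, blk11_yMat_n hn1, mul_one]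

end Assemble

theorem stmt16 (n : ℕ) (hn : 2 ≤ n) (a : ℕ → ℕ → ℝ)
    (hnz : ∀ p q : ℕ, 1 ≤ q → q ≤ n → n + 1 - q ≤ p → p ≤ n → a p q ≠ 0) :
    blk12 n (uProd n a) = 0 ∧
    blk22 n (uProd n a) = ((blk11 n (uProd n a))ᵀ)⁻¹ ∧
    blk11 n (u0Prod n a) = blk11 n (uProd n a) ∧
    ∀ p q : Fin n, (p : ℕ) + 1 + ((q : ℕ) + 1) < n + 1 → blk21 n (uProd n a) p q = 0 := by
  have hn1 : 1 ≤ n := by omega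
  obtain ⟨hz, hd, hc⟩ := Pref_inv (n := n) a n le_rfl
  have hu : uProd n a = ((List.range n).map (fun m' =>
      ((List.range (m' + 1)).map (fun j =>
        yMat n (n - m' + j) (a (n - m' + j) (m' + 1)))).prod)).prod := rfl
  rw [← hu] at hz hd hc
  obtain ⟨_, hgood⟩ := uProd_Z12_GoodT hn1 a
  refine ⟨?_, ?_, ?_, ?_⟩
  · ext p q
    show uProd n a (Fin.castAdd n p) (Fin.natAdd n q) = (0 : Matrix (Fin n) (Fin n) ℝ) p q
    rw [hz _ _ (by simp) (by simp), Matrix.zero_apply]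
  · exact (Matrix.inv_eq_right_inv hgood).symm
  · exact (blk11_pref_eq (n := n) a n le_rfl).2
  · intro p q hpq
    by_contra hne
    have hq : ((Fin.castAdd n q : Fin (n+n)) : ℕ) < n := by simp [q.isLt]
    have := hc (Fin.natAdd n p) (Fin.castAdd n q) (by simp) hq hne
    have e1 : ((Fin.natAdd n p : Fin (n+n)) : ℕ) = n + p := rfl
    have e2 : ((Fin.castAdd n q : Fin (n+n)) : ℕ) = q := rfl
    rw [e1, e2] at this
    omega
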